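/- Let u be a C² solution on (0,R) of u'' + ((N-1)/r) u' = f(u) + g(u') with u(0)=u₀>0, u'(0)=0, which satisfies u' > 0 and u'' ≥ 0 on (0,R). Then u''(r) ≥ (1/N)·(f(u(r)) + g(u'(r))) for all r ∈ (0,R). -/

import Mathlib

open MeasureTheory Filter

/-- For a solution of `u'' + ((N-1)/r) u' = f(u) + g(u')` on `(0,R)` with
`u 0 = u₀ > 0`, `u' 0 = 0`, `u' > 0` and `u'' ≥ 0`, one has
`u'' r ≥ (1/N)(f(u r) + g(u' r))` on `(0,R)`. -/
theorem stmt_7 (f g : ℝ → ℝ) (N : ℝ) (hN : 1 ≤ N)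
    (hfc : ContinuousOn f (Set.Ici 0)) (hgc : ContinuousOn g (Set.Ici 0))
    (hfmono : StrictMonoOn f (Set.Ici 0)) (hgmono : StrictMonoOn g (Set.Ici 0))
    (hf0 : f 0 = 0) (hg0 : g 0 = 0)
    (R u₀ : ℝ) (hR : 0 < R) (hu₀ : 0 < u₀)
    (u u' u'' : ℝ → ℝ)
    (hu' : ∀ r ∈ Set.Ico 0 R, HasDerivAt u (u' r) r)
    (hu'' : ∀ r ∈ Set.Ico 0 R, HasDerivAt u' (u'' r) r)
    (hu''c : ContinuousOn u'' (Set.Ico 0 R))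
    (heq : ∀ r ∈ Set.Ioo 0 R, u'' r + ((N - 1) / r) * u' r = f (u r) + g (u' r))
    (hinit : u 0 = u₀) (hinit' : u' 0 = 0)
    (hu'pos : ∀ r ∈ Set.Ioo 0 R, 0 < u' r)
    (hu''nonneg : ∀ r ∈ Set.Ioo 0 R, 0 ≤ u'' r) :
    ∀ r ∈ Set.Ioo 0 R, (1 / N) * (f (u r) + g (u' r)) ≤ u'' r := by
  intro r hr
  obtain ⟨hr0, hrR⟩ := hr
  have hN0 : (0:ℝ) < N := lt_of_lt_of_le one_pos hN
  set F : ℝ → ℝ := fun s => f (u s) + g (u' s) with hFdef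
  have hsubR : Set.Icc (0:ℝ) r ⊆ Set.Ico 0 R := fun s hs => ⟨hs.1, lt_of_le_of_lt hs.2 hrR⟩
  have hsubIoo : Set.Ioo (0:ℝ) r ⊆ Set.Ioo 0 R := fun s hs => ⟨hs.1, lt_trans hs.2 hrR⟩
  have hucont : ContinuousOn u (Set.Icc 0 r) := fun s hs =>
    ((hu' s (hsubR hs)).continuousAt).continuousWithinAt
  have hu'cont : ContinuousOn u' (Set.Icc 0 r) := fun s hs =>
    ((hu'' s (hsubR hs)).continuousAt).continuousWithinAt
  -- u is monotone on [0, r]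
  have humono : MonotoneOn u (Set.Icc 0 r) := by
    apply monotoneOn_of_deriv_nonneg (convex_Icc 0 r) hucont
    · intro x hx
      rw [interior_Icc] at hx
      exact ((hu' x (hsubR (Set.Ioo_subset_Icc_self hx))).differentiableAt).differentiableWithinAt
    · intro x hx
      rw [interior_Icc] at hx
      rw [(hu' x (hsubR (Set.Ioo_subset_Icc_self hx))).deriv]
      exact (hu'pos x (hsubIoo hx)).le
  -- u' is monotone on [0, r]
  have hu'mono : MonotoneOn u' (Set.Icc 0 r) := by
    apply monotoneOn_of_deriv_nonneg (convex_Icc 0 r) hu'cont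
    · intro x hx
      rw [interior_Icc] at hx
      exact ((hu'' x (hsubR (Set.Ioo_subset_Icc_self hx))).differentiableAt).differentiableWithinAt
    · intro x hx
      rw [interior_Icc] at hx
      rw [(hu'' x (hsubR (Set.Ioo_subset_Icc_self hx))).deriv]
      exact hu''nonneg x (hsubIoo hx)
  -- basic positivity facts
  have hmem0 : (0:ℝ) ∈ Set.Icc (0:ℝ) r := ⟨le_refl 0, hr0.le⟩
  have hunn : ∀ s ∈ Set.Icc (0:ℝ) r, (0:ℝ) ≤ u s := by
    intro s hs
    have := humono hmem0 hs hs.1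
    rw [hinit] at this; linarith
  have hu'nn : ∀ s ∈ Set.Icc (0:ℝ) r, (0:ℝ) ≤ u' s := by
    intro s hs
    have := hu'mono hmem0 hs hs.1
    rw [hinit'] at this; linarith
  -- F is bounded by F r on [0, r]
  have hFle : ∀ s ∈ Set.Icc (0:ℝ) r, F s ≤ F r := by
    intro s hs
    have hrmem : r ∈ Set.Icc (0:ℝ) r := ⟨hr0.le, le_refl r⟩
    have h1 : f (u s) ≤ f (u r) :=
      hfmono.monotoneOn (hunn s hs) (hunn r hrmem) (humono hs hrmem hs.2)
    have h2 : g (u' s) ≤ g (u' r) :=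
      hgmono.monotoneOn (hu'nn s hs) (hu'nn r hrmem) (hu'mono hs hrmem hs.2)
    simp only [hFdef]; linarith
  -- the auxiliary function ψ
  set ψ : ℝ → ℝ := fun s => (F r / N) * s ^ N - s ^ (N - 1) * u' s with hψdef
  have hψmono : MonotoneOn ψ (Set.Icc 0 r) := by
    have hψderiv : ∀ x ∈ Set.Ioo (0:ℝ) r,
        HasDerivAt ψ (x ^ (N - 1) * (F r - F x)) x := by
      intro x hx
      have hxne : x ≠ 0 := ne_of_gt hx.1
      have h1 : HasDerivAt (fun s : ℝ => (F r / N) * s ^ N)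
          ((F r / N) * (N * x ^ (N - 1))) x :=
        (Real.hasDerivAt_rpow_const (Or.inl hxne)).const_mul _
      have h2 : HasDerivAt (fun s : ℝ => s ^ (N - 1) * u' s)
          (((N - 1) * x ^ (N - 1 - 1)) * u' x + x ^ (N - 1) * u'' x) x :=
        (Real.hasDerivAt_rpow_const (Or.inl hxne)).mul (hu'' x (hsubR (Set.Ioo_subset_Icc_self hx)))
      have h3 := h1.sub h2
      refine h3.congr_deriv ?_
      have hx1 : x ^ (N - 1 - 1) = x ^ (N - 1) / x := by
        rw [Real.rpow_sub hx.1, Real.rpow_one]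
      have heqx := heq x (hsubIoo hx)
      have hFx : F x = u'' x + ((N - 1) / x) * u' x := by
        simp only [hFdef]; linarith
      rw [hx1, hFx]
      field_simp
      ring
    apply monotoneOn_of_deriv_nonneg (convex_Icc 0 r)
    · -- continuity of ψ on [0, r]
      apply ContinuousOn.sub
      · exact (continuousOn_const.mul (fun s hs =>
          (Real.continuousAt_rpow_const s N (Or.inr hN0.le)).continuousWithinAt))
      · have hc1 : ContinuousOn (fun s : ℝ => s ^ (N - 1)) (Set.Icc 0 r) := fun s _ =>
          (Real.continuousAt_rpow_const s (N - 1) (Or.inr (by linarith))).continuousWithinAt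
        exact hc1.mul hu'cont
    · intro x hx
      rw [interior_Icc] at hx
      exact (hψderiv x hx).differentiableAt.differentiableWithinAt
    · intro x hx
      rw [interior_Icc] at hx
      rw [(hψderiv x hx).deriv]
      have h1 : (0:ℝ) ≤ x ^ (N - 1) := (Real.rpow_pos_of_pos hx.1 _).le
      have h2 : F x ≤ F r := hFle x (Set.Ioo_subset_Icc_self hx)
      nlinarith
  -- ψ 0 = 0
  have hψ0 : ψ 0 = 0 := by
    simp only [hψdef]
    rw [Real.zero_rpow (ne_of_gt hN0), hinit']
    ring
  have hψr : 0 ≤ ψ r := by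
    have := hψmono hmem0 ⟨hr0.le, le_refl r⟩ hr0.le
    rw [hψ0] at this; exact this
  -- deduce u' r ≤ (F r / N) * r
  have hkey : u' r ≤ (F r / N) * r := by
    have hrpow : (0:ℝ) < r ^ (N - 1) := Real.rpow_pos_of_pos hr0 _
    have hrN : r ^ N = r ^ (N - 1) * r := by
      nth_rewrite 1 [show N = (N - 1) + 1 by ring]
      rw [Real.rpow_add hr0, Real.rpow_one]
    have : r ^ (N - 1) * u' r ≤ (F r / N) * (r ^ (N - 1) * r) := by
      have := hψr
      simp only [hψdef] at this
      rw [hrN] at this; linarith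
    have h2 : r ^ (N - 1) * u' r ≤ r ^ (N - 1) * ((F r / N) * r) := by linarith [this]; 
    exact le_of_mul_le_mul_left (by linarith [h2]) hrpow
  -- conclude
  have heqr := heq r ⟨hr0, hrR⟩
  have hFr : u'' r = F r - ((N - 1) / r) * u' r := by simp only [hFdef]; linarith
  have hc : (0:ℝ) ≤ (N - 1) / r := div_nonneg (by linarith) hr0.le
  have hb : ((N - 1) / r) * u' r ≤ ((N - 1) / r) * ((F r / N) * r) :=
    mul_le_mul_of_nonneg_left hkey hc
  have hsum : (1 / N) * F r + ((N - 1) / r) * ((F r / N) * r) = F r := by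
    field_simp
    ring
  have : (1 / N) * F r ≤ u'' r := by rw [hFr]; linarith
  simpa only [hFdef] using this
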